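/- Let Λ = ℤ^n, Σ^+ the positive roots of the root system of type C_n with simple roots a_i = ε_i − ε_{i+1} (1 ≤ i ≤ n−1), a_n = 2ε_n, and Q^{∨,+} the nonnegative integer span of the simple coroots. Define the partial order μ ⪯ λ on Λ by: λ^+ − μ^+ ∈ Q^{∨,+} with λ^+ ≠ μ^+, or λ^+ = μ^+ and λ − μ ∈ Q^{∨,+}, where λ^+ denotes the unique dominant weight in the Weyl group orbit Wλ. Then for μ ∈ Λ and α ∈ Σ^+ with ⟨μ, α⟩ ≥ 2, one has μ − rα^∨ ≺ μ for all r = 1, …, ⟨μ,α⟩ − 1. -/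

import Mathlib

noncomputable section

/-- Standard basis vector e_i of ℤ^n. -/
def ez {n : ℕ} (i : Fin n) : Fin n → ℤ := fun j => if j = i then 1 else 0

/-- Pairing ⟨μ, α⟩ on ℤ^n. -/
def ipz {n : ℕ} (f g : Fin n → ℤ) : ℤ := ∑ i, f i * g i

/-- The positive roots Σ^+ of type C_n: ε_i − ε_j, ε_i + ε_j (i < j), 2ε_i. -/
def SigmaPlus (n : ℕ) : Set (Fin n → ℤ) :=
  {α | (∃ i j : Fin n, i < j ∧ (α = ez i - ez j ∨ α = ez i + ez j)) ∨ (∃ i, α = (2 : ℤ) • ez i)}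

/-- The coroot α^∨ = 2α/⟨α,α⟩ (for α a root of type C_n the formula below gives
exactly the coroot, using integer division). -/
def coroot {n : ℕ} (α : Fin n → ℤ) : Fin n → ℤ := fun i => (2 * α i) / (∑ j, α j * α j)

/-- The k-th simple coroot of type C_n: e_k − e_{k+1} for k < n−1, and e_{n−1} for k = n−1. -/
def scoroot {n : ℕ} (k : Fin n) : Fin n → ℤ :=
  fun j => (if j = k then 1 else 0) -
    (if ((j : ℕ) = (k : ℕ) + 1 ∧ (k : ℕ) + 1 < n) then 1 else 0)

/-- Membership in Q^{∨,+}, the nonnegative integer span of the simple coroots. -/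
def Qpos {n : ℕ} (v : Fin n → ℤ) : Prop :=
  ∃ c : Fin n → ℕ, v = ∑ k, (c k : ℤ) • scoroot k

/-- λ ≤ μ iff μ − λ ∈ Q^{∨,+}. -/
def wle {n : ℕ} (ν μ : Fin n → ℤ) : Prop := Qpos (μ - ν)

/-- μ is in the orbit of lam under W = S_n ⋉ (±1)^n. -/
def InOrbit {n : ℕ} (lam μ : Fin n → ℤ) : Prop :=
  ∃ (σ : Equiv.Perm (Fin n)) (s : Fin n → ℤ),
    (∀ i, s i = 1 ∨ s i = -1) ∧ ∀ i, μ i = s i * lam (σ i)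

/-- Dominant: weakly decreasing with nonnegative entries. -/
def Dominant {n : ℕ} (μ : Fin n → ℤ) : Prop :=
  (∀ i j : Fin n, i ≤ j → μ j ≤ μ i) ∧ ∀ i, 0 ≤ μ i

/-- μ⁺ : the dominant representative of the orbit W·lam. -/
def IsDomRep {n : ℕ} (lam mup : Fin n → ℤ) : Prop := Dominant mup ∧ InOrbit lam mup

namespace S2
open Finset
variable {n : ℕ}

def psum (v : Fin n → ℤ) (k : ℕ) : ℤ := ∑ i : Fin n, if (i : ℕ) < k then v i else 0

lemma psum_zero (v : Fin n → ℤ) : psum v 0 = 0 := by simp [psum]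

lemma psum_succ (v : Fin n → ℤ) (j : Fin n) :
    psum v ((j : ℕ) + 1) = psum v (j : ℕ) + v j := by
  have key : ∀ i : Fin n, (if (i:ℕ) < (j:ℕ)+1 then v i else 0)
      = (if (i:ℕ) < (j:ℕ) then v i else 0) + (if i = j then v i else 0) := by
    intro i
    by_cases h : i = j
    · subst h; simp
    · have hne : (i:ℕ) ≠ (j:ℕ) := fun hh => h (Fin.ext hh)
      by_cases h2 : (i:ℕ) < (j:ℕ)
      · rw [if_pos (by omega), if_pos h2, if_neg h, add_zero]
      · rw [if_neg (by omega), if_neg h2, if_neg h, add_zero]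
  unfold psum
  simp_rw [key]
  rw [Finset.sum_add_distrib, Finset.sum_ite_eq']
  simp

lemma psum_mono (v : Fin n → ℤ) (hv : ∀ i, 0 ≤ v i) {a b : ℕ} (h : a ≤ b) :
    psum v a ≤ psum v b := by
  apply Finset.sum_le_sum
  intro i _
  by_cases h1 : (i:ℕ) < a
  · rw [if_pos h1, if_pos (by omega)]
  · rw [if_neg h1]; split_ifs
    · exact hv i
    · rfl

lemma psum_add (u v : Fin n → ℤ) (k : ℕ) : psum (u + v) k = psum u k + psum v k := by
  unfold psum; rw [← Finset.sum_add_distrib]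
  exact Finset.sum_congr rfl fun i _ => by split_ifs <;> simp

lemma psum_sub (u v : Fin n → ℤ) (k : ℕ) : psum (u - v) k = psum u k - psum v k := by
  unfold psum; rw [← Finset.sum_sub_distrib]
  exact Finset.sum_congr rfl fun i _ => by split_ifs <;> simp

lemma psum_smul (r : ℤ) (v : Fin n → ℤ) (k : ℕ) : psum (r • v) k = r * psum v k := by
  unfold psum; rw [Finset.mul_sum]
  exact Finset.sum_congr rfl fun i _ => by split_ifs <;> simp

lemma psum_ez (i : Fin n) (k : ℕ) : psum (ez i) k = if (i : ℕ) < k then 1 else 0 := by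
  unfold psum ez
  rw [Finset.sum_congr rfl (g := fun j => if j = i then (if (i:ℕ) < k then (1:ℤ) else 0) else 0)]
  · rw [Finset.sum_ite_eq']; simp
  · intro j _
    by_cases h : j = i
    · subst h; simp
    · simp [h]


lemma psum_finsum {m : ℕ} {ι : Type} [DecidableEq ι] (s : Finset ι) (f : ι → Fin n → ℤ) :
    psum (∑ k ∈ s, f k) m = ∑ k ∈ s, psum (f k) m := by
  induction s using Finset.induction with
  | empty => simp [psum]
  | insert _ _ h ih => rw [Finset.sum_insert h, Finset.sum_insert h, psum_add, ih]

lemma psum_scoroot (k : Fin n) (m : ℕ) :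
    psum (scoroot k) m = (if (k:ℕ) < m then 1 else 0)
      - (if ((k:ℕ)+1 < m ∧ (k:ℕ)+1 < n) then 1 else 0) := by
  have h1 : scoroot k = ez k -
      (fun j : Fin n => if ((j:ℕ) = (k:ℕ)+1 ∧ (k:ℕ)+1 < n) then (1:ℤ) else 0) := by
    funext j; simp [scoroot, ez]
  rw [h1, psum_sub, psum_ez]
  congr 1
  unfold psum
  by_cases hkn : (k:ℕ)+1 < n
  · have key : ∀ i : Fin n, (if (i:ℕ) < m then (if ((i:ℕ) = (k:ℕ)+1 ∧ (k:ℕ)+1 < n) then (1:ℤ) else 0) else 0)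
        = if i = (⟨(k:ℕ)+1, hkn⟩ : Fin n) then (if (k:ℕ)+1 < m then (1:ℤ) else 0) else 0 := by
      intro i
      by_cases h : i = (⟨(k:ℕ)+1, hkn⟩ : Fin n)
      · subst h; simp [hkn]
      · have hne : (i:ℕ) ≠ (k:ℕ)+1 := fun hh => h (Fin.ext hh)
        rw [if_neg h]
        by_cases h2 : (i:ℕ) < m
        · rw [if_pos h2, if_neg (by tauto)]
        · rw [if_neg h2]
    simp_rw [key]
    rw [Finset.sum_ite_eq']
    simp [hkn]
  · have key : ∀ i : Fin n, (if (i:ℕ) < m then (if ((i:ℕ) = (k:ℕ)+1 ∧ (k:ℕ)+1 < n) then (1:ℤ) else 0) else 0) = 0 := by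
      intro i
      by_cases h2 : (i:ℕ) < m
      · rw [if_pos h2, if_neg (by tauto)]
      · rw [if_neg h2]
    simp_rw [key]
    rw [if_neg (by tauto)]
    simp

lemma qpos_iff (v : Fin n → ℤ) : Qpos v ↔ ∀ k : ℕ, 0 ≤ psum v k := by
  constructor
  · rintro ⟨c, rfl⟩ m
    rw [psum_finsum]
    apply Finset.sum_nonneg
    intro k _
    rw [psum_smul, psum_scoroot]
    apply mul_nonneg (by positivity)
    split_ifs <;> omega
  · intro h
    refine ⟨fun k : Fin n => (psum v ((k:ℕ)+1)).toNat, ?_⟩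
    funext j
    have hsum : (∑ k : Fin n, ((psum v ((k:ℕ)+1)).toNat : ℤ) • scoroot k) j
        = ∑ k : Fin n, ((psum v ((k:ℕ)+1)).toNat : ℤ) * scoroot k j := by
      rw [Finset.sum_apply]; simp
    rw [hsum]
    have hexp : ∀ k : Fin n, ((psum v ((k:ℕ)+1)).toNat : ℤ) * scoroot k j
        = (if k = j then ((psum v ((k:ℕ)+1)).toNat : ℤ) else 0)
          - (if ((j:ℕ) = (k:ℕ)+1 ∧ (k:ℕ)+1 < n) then ((psum v ((k:ℕ)+1)).toNat : ℤ) else 0) := by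
      intro k
      unfold scoroot
      by_cases h1 : j = k
      · have h2 : ¬ ((j:ℕ) = (k:ℕ)+1 ∧ (k:ℕ)+1 < n) := by
          rintro ⟨hh, _⟩; rw [h1] at hh; omega
        rw [if_pos h1, if_pos h1.symm, if_neg h2, if_neg h2]
        ring
      · have h1' : ¬ (k = j) := fun hh => h1 hh.symm
        rw [if_neg h1, if_neg h1']
        split_ifs <;> ring
    simp_rw [hexp]
    rw [Finset.sum_sub_distrib, Finset.sum_ite_eq']
    have hsecond : (∑ k : Fin n, if ((j:ℕ) = (k:ℕ)+1 ∧ (k:ℕ)+1 < n) then ((psum v ((k:ℕ)+1)).toNat : ℤ) else 0)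
        = psum v (j:ℕ) := by
      rcases hj : (j : ℕ) with _ | m
      · rw [Finset.sum_eq_zero, psum_zero]
        intro k _; rw [if_neg]; rintro ⟨hh, _⟩; omega
      · have hmn : m < n := by have := j.isLt; omega
        have hm1n : m + 1 ≤ n := hmn
        have key : ∀ k : Fin n, (if (m + 1 = (k:ℕ)+1 ∧ (k:ℕ)+1 < n) then ((psum v ((k:ℕ)+1)).toNat : ℤ) else 0)
            = if k = (⟨m, hmn⟩ : Fin n) then ((psum v (m+1)).toNat : ℤ) else 0 := by
          intro k
          by_cases hk : k = (⟨m, hmn⟩ : Fin n)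
          · subst hk
            have hlt : m + 1 < n := by have := j.isLt; omega
            rw [if_pos ⟨rfl, hlt⟩, if_pos rfl]
          · have : (k:ℕ) ≠ m := fun hh => hk (Fin.ext hh)
            rw [if_neg (by rintro ⟨hh,_⟩; omega), if_neg hk]
        rw [Finset.sum_congr rfl (fun k _ => key k), Finset.sum_ite_eq']
        rw [if_pos (Finset.mem_univ _), Int.toNat_of_nonneg (h _)]
    rw [hsecond]
    simp only [Finset.mem_univ, if_true]
    rw [Int.toNat_of_nonneg (h _), psum_succ]
    ring


lemma sum_subset_le_psum (mup : Fin n → ℤ) (hd : Dominant mup) (U : Finset (Fin n)) :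
    ∑ i ∈ U, mup i ≤ psum mup U.card := by
  suffices H : ∀ (k : ℕ) (U : Finset (Fin n)), U.card = k → ∑ i ∈ U, mup i ≤ psum mup k by
    exact H _ U rfl
  intro k
  induction k with
  | zero =>
    intro U hU
    rw [Finset.card_eq_zero] at hU
    subst hU; simp [psum_zero]
  | succ m ih =>
    intro U hU
    have hne : U.Nonempty := Finset.card_pos.mp (by omega)
    set i0 := U.max' hne with hi0
    have hi0mem : i0 ∈ U := U.max'_mem hne
    have hcard : (U.erase i0).card = m := by
      rw [Finset.card_erase_of_mem hi0mem, hU]; omega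
    have hmn : m < n := by
      have := Finset.card_le_univ U
      simp only [Finset.card_univ, Fintype.card_fin] at this
      omega
    have hmi0 : m ≤ (i0 : ℕ) := by
      have hsub : U.image (Fin.val) ⊆ Finset.range ((i0:ℕ)+1) := by
        intro x hx
        rw [Finset.mem_image] at hx
        obtain ⟨y, hy, rfl⟩ := hx
        rw [Finset.mem_range]
        have := U.le_max' y hy
        omega
      have := Finset.card_le_card hsub
      rw [Finset.card_image_of_injective _ Fin.val_injective, Finset.card_range, hU] at this
      omega
    have h1 : mup i0 ≤ mup ⟨m, hmn⟩ := hd.1 ⟨m, hmn⟩ i0 (by rw [Fin.le_def]; exact hmi0)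
    calc ∑ i ∈ U, mup i = ∑ i ∈ U.erase i0, mup i + mup i0 := (Finset.sum_erase_add _ _ hi0mem).symm
      _ ≤ psum mup m + mup ⟨m, hmn⟩ := add_le_add (by simpa [hcard] using ih (U.erase i0) hcard) h1
      _ = psum mup (m+1) := (psum_succ mup ⟨m, hmn⟩).symm

lemma orbit_abs {lam mup : Fin n → ℤ} (h : IsDomRep lam mup) :
    ∃ σ : Equiv.Perm (Fin n), ∀ i, mup i = |lam (σ i)| := by
  obtain ⟨⟨_, hpos⟩, σ, s, hs, heq⟩ := h
  refine ⟨σ, fun i => ?_⟩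
  have h1 : |mup i| = mup i := abs_of_nonneg (hpos i)
  rw [← h1, heq i, abs_mul]
  rcases hs i with h2 | h2 <;> rw [h2] <;> simp

lemma sum_abs_le {lam mup : Fin n → ℤ} (h : IsDomRep lam mup) (U : Finset (Fin n)) :
    ∑ t ∈ U, |lam t| ≤ psum mup U.card := by
  obtain ⟨σ, hσ⟩ := orbit_abs h
  have h1 : ∑ i ∈ U.image σ.symm, mup i = ∑ t ∈ U, |lam t| := by
    rw [Finset.sum_image (fun a _ b _ hab => σ.symm.injective hab)]
    apply Finset.sum_congr rfl
    intro t _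
    rw [hσ]
    simp
  rw [← h1]
  have h2 : (U.image σ.symm).card = U.card :=
    Finset.card_image_of_injective _ σ.symm.injective
  rw [← h2]
  exact sum_subset_le_psum mup h.1 _

lemma key_pointwise {lam mup ν : Fin n → ℤ} (h : IsDomRep lam mup)
    (hpt : ∀ t, |ν t| ≤ |lam t|) (T : Finset (Fin n)) :
    ∑ t ∈ T, |ν t| ≤ psum mup T.card :=
  le_trans (Finset.sum_le_sum fun t _ => hpt t) (sum_abs_le h T)

lemma key_one {lam mup ν : Fin n → ℤ} (h : IsDomRep lam mup)
    {i0 j0 : Fin n} (hij : i0 ≠ j0)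
    (hoff : ∀ t, t ≠ i0 → t ≠ j0 → |ν t| = |lam t|)
    (hm1 : |ν i0| ≤ max |lam i0| |lam j0|)
    (T : Finset (Fin n)) (hiT : i0 ∈ T) (hjT : j0 ∉ T) :
    ∑ t ∈ T, |ν t| ≤ psum mup T.card := by
  rcases le_total (|lam j0|) (|lam i0|) with hmax | hmax
  · refine le_trans (Finset.sum_le_sum ?_) (sum_abs_le h T)
    intro t ht
    by_cases h1 : t = i0
    · subst h1; exact hm1.trans_eq (max_eq_left hmax)
    · exact le_of_eq (hoff t h1 (fun hh => hjT (hh ▸ ht)))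
  · have h1 : |ν i0| ≤ |lam j0| := hm1.trans_eq (max_eq_right hmax)
    set T' := insert j0 (T.erase i0) with hT'
    have hjT' : j0 ∉ T.erase i0 := fun hh => hjT (Finset.mem_of_mem_erase hh)
    have hcard : T'.card = T.card := by
      rw [hT', Finset.card_insert_of_notMem hjT', Finset.card_erase_of_mem hiT]
      have : 0 < T.card := Finset.card_pos.mpr ⟨i0, hiT⟩
      omega
    calc ∑ t ∈ T, |ν t| = ∑ t ∈ T.erase i0, |ν t| + |ν i0| := (Finset.sum_erase_add _ _ hiT).symm
      _ ≤ ∑ t ∈ T.erase i0, |lam t| + |lam j0| := by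
          apply add_le_add _ h1
          apply le_of_eq
          apply Finset.sum_congr rfl
          intro t ht
          rw [Finset.mem_erase] at ht
          exact hoff t ht.1 (fun hh => hjT (hh ▸ ht.2))
      _ = ∑ t ∈ T', |lam t| := by rw [hT', Finset.sum_insert hjT']; ring
      _ ≤ psum mup T'.card := sum_abs_le h T'
      _ = psum mup T.card := by rw [hcard]

lemma key_main {lam mup ν : Fin n → ℤ} (h : IsDomRep lam mup)
    {i0 j0 : Fin n} (hij : i0 ≠ j0)
    (hoff : ∀ t, t ≠ i0 → t ≠ j0 → |ν t| = |lam t|)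
    (hsum : |ν i0| + |ν j0| ≤ |lam i0| + |lam j0|)
    (hm1 : |ν i0| ≤ max |lam i0| |lam j0|)
    (hm2 : |ν j0| ≤ max |lam i0| |lam j0|)
    (T : Finset (Fin n)) :
    ∑ t ∈ T, |ν t| ≤ psum mup T.card := by
  by_cases hiT : i0 ∈ T <;> by_cases hjT : j0 ∈ T
  · have hjT' : j0 ∈ T.erase i0 := Finset.mem_erase.mpr ⟨Ne.symm hij, hjT⟩
    have heq : ∑ t ∈ (T.erase i0).erase j0, |ν t| = ∑ t ∈ (T.erase i0).erase j0, |lam t| := by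
      apply Finset.sum_congr rfl
      intro t ht
      rw [Finset.mem_erase, Finset.mem_erase] at ht
      exact hoff t ht.2.1 ht.1
    calc ∑ t ∈ T, |ν t| = (∑ t ∈ (T.erase i0).erase j0, |ν t| + |ν j0|) + |ν i0| := by
          rw [Finset.sum_erase_add _ _ hjT', Finset.sum_erase_add _ _ hiT]
      _ ≤ (∑ t ∈ (T.erase i0).erase j0, |lam t| + |lam j0|) + |lam i0| := by
          rw [heq]; omega
      _ = ∑ t ∈ T, |lam t| := by rw [Finset.sum_erase_add _ _ hjT', Finset.sum_erase_add _ _ hiT]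
      _ ≤ psum mup T.card := sum_abs_le h T
  · exact key_one h hij hoff hm1 T hiT hjT
  · exact key_one h (Ne.symm hij) (fun t ha hb => hoff t hb ha) (by rwa [max_comm] at hm2) T hjT hiT
  · refine le_trans (le_of_eq (Finset.sum_congr rfl ?_)) (sum_abs_le h T)
    intro t ht
    exact hoff t (fun hh => hiT (hh ▸ ht)) (fun hh => hjT (hh ▸ ht))

lemma final_qpos {μ ν mup nup : Fin n → ℤ} (hmu : IsDomRep μ mup) (hnu : IsDomRep ν nup)
    (hkey : ∀ T : Finset (Fin n), ∑ t ∈ T, |ν t| ≤ psum mup T.card) :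
    Qpos (mup - nup) := by
  rw [qpos_iff]
  intro k
  rw [psum_sub]
  suffices hle : psum nup k ≤ psum mup k by omega
  obtain ⟨σ, hσ⟩ := orbit_abs hnu
  set S := Finset.univ.filter (fun i : Fin n => (i:ℕ) < k) with hS
  have h1 : psum nup k = ∑ i ∈ S, nup i := (Finset.sum_filter _ _).symm
  have h2 : ∑ i ∈ S, nup i = ∑ t ∈ S.image σ, |ν t| := by
    rw [Finset.sum_image (fun a _ b _ hab => σ.injective hab)]
    exact Finset.sum_congr rfl fun i _ => hσ i
  have hcard : (S.image σ).card ≤ k := by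
    rw [Finset.card_image_of_injective _ σ.injective]
    have hsub : S.image Fin.val ⊆ Finset.range k := by
      intro x hx
      rw [Finset.mem_image] at hx
      obtain ⟨y, hy, rfl⟩ := hx
      rw [hS, Finset.mem_filter] at hy
      rw [Finset.mem_range]
      exact hy.2
    have := Finset.card_le_card hsub
    rwa [Finset.card_image_of_injective _ Fin.val_injective, Finset.card_range] at this
  calc psum nup k = ∑ t ∈ S.image σ, |ν t| := by rw [h1, h2]
    _ ≤ psum mup (S.image σ).card := hkey _
    _ ≤ psum mup k := psum_mono mup hmu.1.2 hcard


lemma sum_mul_ez (μ : Fin n → ℤ) (i : Fin n) : ∑ t, μ t * ez i t = μ i := by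
  have key : ∀ t : Fin n, μ t * ez i t = if t = i then μ t else 0 := by
    intro t; by_cases h : t = i <;> simp [ez, h]
  rw [Finset.sum_congr rfl (fun t _ => key t), Finset.sum_ite_eq']
  simp

lemma ipz_sub (μ : Fin n → ℤ) {i j : Fin n} :
    ipz μ (ez i - ez j) = μ i - μ j := by
  unfold ipz
  have key : ∀ t : Fin n, μ t * (ez i - ez j) t = μ t * ez i t - μ t * ez j t := by
    intro t; simp [Pi.sub_apply]; ring
  rw [Finset.sum_congr rfl (fun t _ => key t), Finset.sum_sub_distrib, sum_mul_ez, sum_mul_ez]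

lemma ipz_add (μ : Fin n → ℤ) {i j : Fin n} :
    ipz μ (ez i + ez j) = μ i + μ j := by
  unfold ipz
  have key : ∀ t : Fin n, μ t * (ez i + ez j) t = μ t * ez i t + μ t * ez j t := by
    intro t; simp [Pi.add_apply]; ring
  rw [Finset.sum_congr rfl (fun t _ => key t), Finset.sum_add_distrib, sum_mul_ez, sum_mul_ez]

lemma ipz_two (μ : Fin n → ℤ) {i : Fin n} :
    ipz μ ((2:ℤ) • ez i) = 2 * μ i := by
  unfold ipz
  have key : ∀ t : Fin n, μ t * ((2:ℤ) • ez i) t = 2 * (μ t * ez i t) := by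
    intro t; simp [Pi.smul_apply, smul_eq_mul]; ring
  rw [Finset.sum_congr rfl (fun t _ => key t), ← Finset.mul_sum, sum_mul_ez]

lemma coroot_sub {i j : Fin n} (hij : i ≠ j) : coroot (ez i - ez j) = ez i - ez j := by
  have hs : (∑ t, (ez i - ez j) t * (ez i - ez j) t) = 2 := by
    have key : ∀ t : Fin n, (ez i - ez j) t * (ez i - ez j) t
        = (if t = i then 1 else 0) + (if t = j then 1 else 0) := by
      intro t
      by_cases h1 : t = i <;> by_cases h2 : t = j <;>
        simp_all [ez, Pi.sub_apply]
    rw [Finset.sum_congr rfl (fun t _ => key t), Finset.sum_add_distrib,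
      Finset.sum_ite_eq', Finset.sum_ite_eq']
    simp
  funext t
  show (2 * (ez i - ez j) t) / _ = _
  rw [hs, Int.mul_ediv_cancel_left _ two_ne_zero]

lemma coroot_add {i j : Fin n} (hij : i ≠ j) : coroot (ez i + ez j) = ez i + ez j := by
  have hs : (∑ t, (ez i + ez j) t * (ez i + ez j) t) = 2 := by
    have key : ∀ t : Fin n, (ez i + ez j) t * (ez i + ez j) t
        = (if t = i then 1 else 0) + (if t = j then 1 else 0) := by
      intro t
      by_cases h1 : t = i <;> by_cases h2 : t = j <;>
        simp_all [ez, Pi.add_apply]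
    rw [Finset.sum_congr rfl (fun t _ => key t), Finset.sum_add_distrib,
      Finset.sum_ite_eq', Finset.sum_ite_eq']
    simp
  funext t
  show (2 * (ez i + ez j) t) / _ = _
  rw [hs, Int.mul_ediv_cancel_left _ two_ne_zero]

lemma coroot_two (i : Fin n) : coroot ((2:ℤ) • ez i) = ez i := by
  have hs : (∑ t, ((2:ℤ) • ez i) t * ((2:ℤ) • ez i) t) = 4 := by
    have key : ∀ t : Fin n, ((2:ℤ) • ez i) t * ((2:ℤ) • ez i) t
        = if t = i then 4 else 0 := by
      intro t
      by_cases h1 : t = i <;> simp_all [ez, Pi.smul_apply]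
    rw [Finset.sum_congr rfl (fun t _ => key t), Finset.sum_ite_eq']
    simp
  funext t
  show (2 * ((2:ℤ) • ez i) t) / _ = _
  rw [hs]
  by_cases h1 : t = i <;> simp [ez, Pi.smul_apply, h1]

lemma absh1 (a b r : ℤ) (h1 : 1 ≤ r) (h2 : r ≤ a - b - 1) :
    |a - r| + |b + r| ≤ |a| + |b| ∧ |a - r| ≤ max |a| |b| ∧ |b + r| ≤ max |a| |b| := by
  rcases abs_cases a with ⟨e1,f1⟩|⟨e1,f1⟩ <;> rcases abs_cases b with ⟨e2,f2⟩|⟨e2,f2⟩ <;>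
    rcases abs_cases (a-r) with ⟨e3,f3⟩|⟨e3,f3⟩ <;> rcases abs_cases (b+r) with ⟨e4,f4⟩|⟨e4,f4⟩ <;>
    rcases max_cases |a| |b| with ⟨e5,f5⟩|⟨e5,f5⟩ <;>
    exact ⟨by omega, by omega, by omega⟩

lemma absh2 (a b r : ℤ) (h1 : 1 ≤ r) (h2 : r ≤ a + b - 1) :
    |a - r| + |b - r| ≤ |a| + |b| ∧ |a - r| ≤ max |a| |b| ∧ |b - r| ≤ max |a| |b| := by
  rcases abs_cases a with ⟨e1,f1⟩|⟨e1,f1⟩ <;> rcases abs_cases b with ⟨e2,f2⟩|⟨e2,f2⟩ <;>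
    rcases abs_cases (a-r) with ⟨e3,f3⟩|⟨e3,f3⟩ <;> rcases abs_cases (b-r) with ⟨e4,f4⟩|⟨e4,f4⟩ <;>
    rcases max_cases |a| |b| with ⟨e5,f5⟩|⟨e5,f5⟩ <;>
    exact ⟨by omega, by omega, by omega⟩

lemma absh3 (a r : ℤ) (h1 : 1 ≤ r) (h2 : r ≤ 2*a - 1) : |a - r| ≤ |a| := by
  rcases abs_cases a with ⟨e1,f1⟩|⟨e1,f1⟩ <;> rcases abs_cases (a-r) with ⟨e3,f3⟩|⟨e3,f3⟩ <;> omega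

end S2

/-- if ⟨μ, α⟩ ≥ 2 then μ − rα^∨ ≺ μ for r = 1, …, ⟨μ,α⟩ − 1, where
ν ≺ μ means ν⁺ < μ⁺, or ν⁺ = μ⁺ and ν < μ (with < induced by Q^{∨,+}). -/
theorem stmt2 (n : ℕ) (μ : Fin n → ℤ) (α : Fin n → ℤ) (hα : α ∈ SigmaPlus n)
    (h2 : 2 ≤ ipz μ α) (r : ℤ) (hr1 : 1 ≤ r) (hr2 : r ≤ ipz μ α - 1)
    (mup nup : Fin n → ℤ)
    (hmu : IsDomRep μ mup) (hnu : IsDomRep (μ - r • coroot α) nup) :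
    (wle nup mup ∧ nup ≠ mup) ∨
      (nup = mup ∧ wle (μ - r • coroot α) μ ∧ μ - r • coroot α ≠ μ) := by
  have main : (∀ T : Finset (Fin n), ∑ t ∈ T, |(μ - r • coroot α) t| ≤ S2.psum mup T.card) ∧
      Qpos (μ - (μ - r • coroot α)) ∧ μ - r • coroot α ≠ μ := by
    rw [sub_sub_cancel]
    rcases hα with ⟨i, j, hlt, hco | hco⟩ | ⟨i, hco⟩
    · subst hco
      have hij : i ≠ j := ne_of_lt hlt
      have hcor : coroot (ez i - ez j) = ez i - ez j := S2.coroot_sub hij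
      have hip : ipz μ (ez i - ez j) = μ i - μ j := S2.ipz_sub μ
      rw [hip] at hr2
      have hνt : ∀ t, (μ - r • coroot (ez i - ez j)) t
          = μ t - r * ((if t = i then 1 else 0) - (if t = j then 1 else 0)) := by
        intro t; rw [hcor]; simp [ez, Pi.sub_apply, Pi.smul_apply, smul_eq_mul]
      have hνi : (μ - r • coroot (ez i - ez j)) i = μ i - r := by
        rw [hνt i, if_pos rfl, if_neg hij]; ring
      have hνj : (μ - r • coroot (ez i - ez j)) j = μ j + r := by
        rw [hνt j, if_neg (Ne.symm hij), if_pos rfl]; ring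
      have habs := S2.absh1 (μ i) (μ j) r hr1 (by omega)
      refine ⟨?_, ?_, ?_⟩
      · apply S2.key_main hmu hij
        · intro t ht1 ht2
          rw [hνt t, if_neg ht1, if_neg ht2]
          norm_num
        · rw [hνi, hνj]; exact habs.1
        · rw [hνi]; exact habs.2.1
        · rw [hνj]; exact habs.2.2
      · rw [hcor, S2.qpos_iff]
        intro k
        rw [S2.psum_smul, S2.psum_sub, S2.psum_ez, S2.psum_ez]
        apply mul_nonneg (by omega)
        have hltn : (i:ℕ) < (j:ℕ) := hlt
        split_ifs <;> omega
      · intro hcon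
        have := congrFun hcon i
        rw [hνi] at this
        omega
    · subst hco
      have hij : i ≠ j := ne_of_lt hlt
      have hcor : coroot (ez i + ez j) = ez i + ez j := S2.coroot_add hij
      have hip : ipz μ (ez i + ez j) = μ i + μ j := S2.ipz_add μ
      rw [hip] at hr2
      have hνt : ∀ t, (μ - r • coroot (ez i + ez j)) t
          = μ t - r * ((if t = i then 1 else 0) + (if t = j then 1 else 0)) := by
        intro t; rw [hcor]; simp [ez, Pi.add_apply, Pi.smul_apply, smul_eq_mul]
        split_ifs <;> ring
      have hνi : (μ - r • coroot (ez i + ez j)) i = μ i - r := by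
        rw [hνt i, if_pos rfl, if_neg hij]; ring
      have hνj : (μ - r • coroot (ez i + ez j)) j = μ j - r := by
        rw [hνt j, if_neg (Ne.symm hij), if_pos rfl]; ring
      have habs := S2.absh2 (μ i) (μ j) r hr1 (by omega)
      refine ⟨?_, ?_, ?_⟩
      · apply S2.key_main hmu hij
        · intro t ht1 ht2
          rw [hνt t, if_neg ht1, if_neg ht2]
          norm_num
        · rw [hνi, hνj]; exact habs.1
        · rw [hνi]; exact habs.2.1
        · rw [hνj]; exact habs.2.2
      · rw [hcor, S2.qpos_iff]
        intro k
        rw [S2.psum_smul, S2.psum_add, S2.psum_ez, S2.psum_ez]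
        apply mul_nonneg (by omega)
        split_ifs <;> omega
      · intro hcon
        have := congrFun hcon i
        rw [hνi] at this
        omega
    · subst hco
      have hcor : coroot ((2:ℤ) • ez i) = ez i := S2.coroot_two i
      have hip : ipz μ ((2:ℤ) • ez i) = 2 * μ i := S2.ipz_two μ
      rw [hip] at hr2
      have hνt : ∀ t, (μ - r • coroot ((2:ℤ) • ez i)) t
          = μ t - r * (if t = i then 1 else 0) := by
        intro t; rw [hcor]; simp [ez, Pi.smul_apply, smul_eq_mul]
      have hνi : (μ - r • coroot ((2:ℤ) • ez i)) i = μ i - r := by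
        rw [hνt i, if_pos rfl]; ring
      refine ⟨?_, ?_, ?_⟩
      · apply S2.key_pointwise hmu
        intro t
        by_cases ht : t = i
        · subst ht
          rw [hνi]
          exact S2.absh3 (μ t) r hr1 (by omega)
        · rw [hνt t, if_neg ht]
          norm_num
      · rw [hcor, S2.qpos_iff]
        intro k
        rw [S2.psum_smul, S2.psum_ez]
        apply mul_nonneg (by omega)
        split_ifs <;> omega
      · intro hcon
        have := congrFun hcon i
        rw [hνi] at this
        omega
  obtain ⟨hkey, hQ2, hneq⟩ := main
  have hQ : Qpos (mup - nup) := S2.final_qpos hmu hnu hkey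
  by_cases heq : nup = mup
  · exact Or.inr ⟨heq, hQ2, hneq⟩
  · exact Or.inl ⟨hQ, heq⟩


end
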